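/- For the location-scale t distribution with 4 degrees of freedom, location μ and scale σ, the CRPS at observation y equals σz[2F₄*(z) - 1] + 2[(4σ² + (y-μ)²)/(3σ)] f₄*(z) - 4σ B(1/2, 7/2)/(3 B(1/2, 2)²), where z = (y-μ)/σ, f₄* and F₄* are the standard t(4) pdf and cdf, and B is the Beta function. -/

import Mathlib

open Real MeasureTheory Filter Set Topology

noncomputable def crpsG (x : ℝ) : ℝ := x*(x^2+6)/(2*(Real.sqrt (x^2+4))^3)
noncomputable def crpsD (x : ℝ) : ℝ := 12/(Real.sqrt (x^2+4))^5
noncomputable def crpsW (x : ℝ) : ℝ := x/2 - Real.sqrt (x^2+4)/2 + 1/Real.sqrt (x^2+4)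
  - (15/32)*(x/(x^2+4)) - x/(4*(x^2+4)^2) - (15/64)*Real.arctan (x/2)

lemma crps_q_pos (x : ℝ) : 0 < Real.sqrt (x^2+4) := Real.sqrt_pos.mpr (by positivity)

lemma crps_q_sq (x : ℝ) : (Real.sqrt (x^2+4))^2 = x^2+4 := Real.sq_sqrt (by positivity)

lemma crps_q_even (x : ℝ) : Real.sqrt ((-x)^2+4) = Real.sqrt (x^2+4) := by rw [neg_pow]; ring_nf

lemma crpsG_odd (x : ℝ) : crpsG (-x) = -crpsG x := by
  unfold crpsG; rw [crps_q_even, neg_pow]; ring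

lemma hasDerivAt_crps_q (x : ℝ) :
    HasDerivAt (fun x => Real.sqrt (x^2+4)) (x / Real.sqrt (x^2+4)) x := by
  have h1 : HasDerivAt (fun x : ℝ => x^2+4) (2*x) x := by
    simpa using (hasDerivAt_pow 2 x).add_const 4
  have h2 := (Real.hasDerivAt_sqrt (show x^2+4 ≠ 0 by positivity)).comp x h1
  refine h2.congr_deriv (Eq.symm ?_)
  have := crps_q_pos x
  field_simp

lemma hasDerivAt_crpsG (x : ℝ) : HasDerivAt crpsG (crpsD x) x := by
  set q := Real.sqrt (x^2+4) with hqdef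
  have hq : q^2 = x^2+4 := crps_q_sq x
  have hq0 : 0 < q := crps_q_pos x
  have hnum : HasDerivAt (fun x : ℝ => x*(x^2+6)) (1*(x^2+6) + x*(2*x)) x := by
    exact (hasDerivAt_id x).mul (by simpa using (hasDerivAt_pow 2 x).add_const 6)
  have hden : HasDerivAt (fun x : ℝ => 2*(Real.sqrt (x^2+4))^3)
      (2*(3*q^2*(x/q))) x := by
    have := ((hasDerivAt_crps_q x).pow 3).const_mul 2
    simpa using this
  have hd0 : 2*(Real.sqrt (x^2+4))^3 ≠ 0 := by positivity
  have := hnum.div hden hd0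
  refine this.congr_deriv (Eq.symm ?_)
  rw [crpsD, ← hqdef]
  have hq0' : q ≠ 0 := ne_of_gt hq0
  field_simp
  linear_combination (-(12:ℝ)*q^7 - 6*q^7*x^2 - ((-6*q^7 + 3)*x^2 + (-3*q^2 - 36*q^7 + 6*q^9 + 18) + (-6*q^7 + 3)*(q^2-4))) * hq

lemma hasDerivAt_crpsW (x : ℝ) : HasDerivAt crpsW ((1/2 - crpsG x)^2) x := by
  set q := Real.sqrt (x^2+4) with hqdef
  have hq : q^2 = x^2+4 := crps_q_sq x
  have hq0 : 0 < q := crps_q_pos x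
  have hr0 : (x:ℝ)^2+4 ≠ 0 := by positivity
  have hpoly : HasDerivAt (fun x : ℝ => x^2+4) (2*x) x := by
    simpa using (hasDerivAt_pow 2 x).add_const 4
  have h1 : HasDerivAt (fun x : ℝ => x/2) (1/2) x := by
    simpa using (hasDerivAt_id x).div_const 2
  have h2 : HasDerivAt (fun x : ℝ => Real.sqrt (x^2+4)/2) ((x/q)/2) x :=
    (hasDerivAt_crps_q x).div_const 2
  have h3 : HasDerivAt (fun x : ℝ => 1/Real.sqrt (x^2+4)) (-(x/q)/q^2) x := by
    simpa [one_div, Pi.inv_def] using (hasDerivAt_crps_q x).inv (ne_of_gt hq0)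
  have h4 : HasDerivAt (fun x : ℝ => x/(x^2+4)) ((1*(x^2+4) - x*(2*x))/(x^2+4)^2) x := by
    simpa [Pi.div_def] using (hasDerivAt_id x).div hpoly hr0
  have h5 : HasDerivAt (fun x : ℝ => x/(4*(x^2+4)^2))
      ((1*(4*(x^2+4)^2) - x*(4*(2*(x^2+4)^1*(2*x))))/(4*(x^2+4)^2)^2) x := by
    exact (hasDerivAt_id x).div (by simpa using (hpoly.pow 2).const_mul 4) (by positivity)
  have h6 : HasDerivAt (fun x : ℝ => Real.arctan (x/2)) ((1/(1+(x/2)^2)) * (1/2)) x := by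
    exact (Real.hasDerivAt_arctan (x/2)).comp x ((hasDerivAt_id x).div_const 2)
  have := ((((h1.sub h2).add h3).sub (h4.const_mul (15/32))).sub h5).sub (h6.const_mul (15/64))
  refine this.congr_deriv (Eq.symm ?_)
  rw [crpsG, ← hqdef]
  rw [show (x:ℝ)^2+4 = q^2 from hq.symm]
  field_simp
  linear_combination ((-4194304:ℝ)*q^16*x^2 + (-1572864:ℝ)*q^16*x^4 + (-131072:ℝ)*q^16*x^6 + (-131072:ℝ)*q^18 + (-557056:ℝ)*q^18*x^2 + (-131072:ℝ)*q^18*x^4 + (1048576:ℝ)*q^19*x + (262144:ℝ)*q^19*x^3 + (-278528:ℝ)*q^20 + (-131072:ℝ)*q^20*x^2 + (131072:ℝ)*q^16*x^6 + (-8192:ℝ)*q^0*x^6 + (1572864:ℝ)*q^16*x^4 + (-98304:ℝ)*q^0*x^4 + (131072:ℝ)*q^18*x^4 + (-8192:ℝ)*q^2*x^4 + (16384:ℝ)*q^3*x^3 + (-262144:ℝ)*q^19*x^3 + (-34816:ℝ)*q^2*x^2 + (4194304:ℝ)*q^16*x^2 + (557056:ℝ)*q^18*x^2 + (-262144:ℝ)*q^0*x^2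 + (131072:ℝ)*q^20*x^2 + (-8192:ℝ)*q^4*x^2 + (65536:ℝ)*q^3*x^1 + (-1048576:ℝ)*q^19*x^1 + (-8192:ℝ)*q^2*x^0 + (-17408:ℝ)*q^4*x^0 + (131072:ℝ)*q^18*x^0 + (278528:ℝ)*q^20*x^0) * hq

lemma crps_le_q (x : ℝ) : x ≤ Real.sqrt (x^2+4) :=
  le_trans (le_abs_self x) (by
    rw [← Real.sqrt_sq_eq_abs]; exact Real.sqrt_le_sqrt (by linarith))

lemma crps_q_tendsto : Tendsto (fun x : ℝ => Real.sqrt (x^2+4)) atTop atTop :=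
  tendsto_atTop_mono crps_le_q tendsto_id

lemma crps_T2 : Tendsto (fun x : ℝ => 1/Real.sqrt (x^2+4)) atTop (𝓝 0) := by
  simpa [one_div, Pi.inv_def] using crps_q_tendsto.inv_tendsto_atTop

lemma crps_T3 : Tendsto (fun x : ℝ => x/2 - Real.sqrt (x^2+4)/2) atTop (𝓝 0) := by
  have hd : Tendsto (fun x : ℝ => Real.sqrt (x^2+4) + x) atTop atTop :=
    Filter.Tendsto.atTop_add_atTop crps_q_tendsto tendsto_id
  have h0 : Tendsto (fun x : ℝ => -(2/(Real.sqrt (x^2+4) + x))) atTop (𝓝 (-(2*0))) := by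
    exact ((hd.inv_tendsto_atTop.const_mul 2).neg).congr (by intro x; simp [div_eq_mul_inv, mul_comm])
  rw [show (0:ℝ) = -(2*0) by ring]
  apply h0.congr'
  filter_upwards [eventually_ge_atTop (0:ℝ)] with x hx
  have hq := crps_q_sq x
  have hq0 := crps_q_pos x
  have hdp : 0 < Real.sqrt (x^2+4) + x := by linarith
  field_simp
  linear_combination hq

lemma crps_T4 : Tendsto (fun x : ℝ => x/(x^2+4)) atTop (𝓝 0) := by
  apply squeeze_zero_norm' _ tendsto_inv_atTop_zero
  filter_upwards [eventually_ge_atTop (1:ℝ)] with x hx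
  have h1 : (0:ℝ) < x := by linarith
  rw [Real.norm_eq_abs, abs_of_nonneg (by positivity)]
  rw [div_le_iff₀ (by positivity)]
  have : x⁻¹ * (x^2+4) = x + 4*x⁻¹ := by field_simp
  rw [this]
  have : 0 < 4*x⁻¹ := by positivity
  linarith

lemma crps_T5 : Tendsto (fun x : ℝ => x/(4*(x^2+4)^2)) atTop (𝓝 0) := by
  apply squeeze_zero_norm' _ tendsto_inv_atTop_zero
  filter_upwards [eventually_ge_atTop (1:ℝ)] with x hx
  have h1 : (0:ℝ) < x := by linarith
  rw [Real.norm_eq_abs, abs_of_nonneg (by positivity)]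
  rw [div_le_iff₀ (by positivity)]
  rw [show x⁻¹ * (4*(x^2+4)^2) = (4*(x^2+4)^2)/x by ring, le_div_iff₀ h1]
  nlinarith

lemma crps_T6 : Tendsto (fun x : ℝ => Real.arctan (x/2)) atTop (𝓝 (π/2)) := by
  exact (Real.tendsto_arctan_atTop.mono_right nhdsWithin_le_nhds).comp
    (tendsto_id.atTop_div_const (by norm_num))

lemma crpsW_tendsto : Tendsto crpsW atTop (𝓝 (-(15*π/128))) := by
  have : Tendsto (fun x : ℝ => (x/2 - Real.sqrt (x^2+4)/2) + 1/Real.sqrt (x^2+4)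
      - (15/32)*(x/(x^2+4)) - x/(4*(x^2+4)^2) - (15/64)*Real.arctan (x/2)) atTop
      (𝓝 ((0 + 0 - (15/32)*0 - 0 - (15/64)*(π/2)))) := by
    exact ((((crps_T3.add crps_T2).sub (crps_T4.const_mul _)).sub crps_T5).sub
      (crps_T6.const_mul _))
  have h2 : Tendsto crpsW atTop (𝓝 ((0 + 0 - (15/32)*0 - 0 - (15/64)*(π/2)))) :=
    this.congr (fun x => by unfold crpsW; ring)
  convert h2 using 2
  ring

lemma crps_two_le_q (x : ℝ) : (2:ℝ) ≤ Real.sqrt (x^2+4) := by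
  rw [show (2:ℝ) = Real.sqrt 4 by
    rw [show (4:ℝ) = 2^2 by norm_num, Real.sqrt_sq (by norm_num)]]
  exact Real.sqrt_le_sqrt (by nlinarith [sq_nonneg x])

lemma crps_T7 : Tendsto (fun x : ℝ => x/(Real.sqrt (x^2+4))^3) atTop (𝓝 0) := by
  apply squeeze_zero_norm' _ tendsto_inv_atTop_zero
  filter_upwards [eventually_ge_atTop (1:ℝ)] with x hx
  have h1 : (0:ℝ) < x := by linarith
  have hq := crps_q_sq x
  have h2 := crps_two_le_q x
  have hq0 := crps_q_pos x
  rw [Real.norm_eq_abs, abs_of_nonneg (by positivity), div_le_iff₀ (by positivity),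
    show x⁻¹ * (Real.sqrt (x^2+4))^3 = (Real.sqrt (x^2+4))^3/x by ring, le_div_iff₀ h1]
  nlinarith [sq_nonneg x]

lemma crps_T8 : Tendsto (fun x : ℝ => x/Real.sqrt (x^2+4)) atTop (𝓝 1) := by
  have hd : Tendsto (fun x : ℝ => (Real.sqrt (x^2+4) + x) * Real.sqrt (x^2+4)) atTop atTop :=
    (Filter.Tendsto.atTop_add_atTop crps_q_tendsto tendsto_id).atTop_mul_atTop₀ crps_q_tendsto
  have h0 : Tendsto (fun x : ℝ => 1 - 4/((Real.sqrt (x^2+4) + x) * Real.sqrt (x^2+4)))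
      atTop (𝓝 (1 - 4*0)) := by
    exact (((hd.inv_tendsto_atTop.const_mul 4).congr
      (by intro x; simp [div_eq_mul_inv, mul_comm])).const_sub 1)
  rw [show (1:ℝ) = 1 - 4*0 by ring]
  apply h0.congr'
  filter_upwards [eventually_ge_atTop (0:ℝ)] with x hx
  have hq := crps_q_sq x
  have hq0 := crps_q_pos x
  have hdp : 0 < Real.sqrt (x^2+4) + x := by linarith
  field_simp
  linear_combination hq

lemma crpsG_tendsto : Tendsto crpsG atTop (𝓝 (1/2 : ℝ)) := by
  have h : Tendsto (fun x : ℝ => (x/Real.sqrt (x^2+4)) * (1/2) + x/(Real.sqrt (x^2+4))^3)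
      atTop (𝓝 (1 * (1/2) + 0)) := (crps_T8.mul_const _).add crps_T7
  rw [show (1/2 : ℝ) = 1 * (1/2) + 0 by ring]
  apply h.congr
  intro x
  have hq := crps_q_sq x
  have hq0 := (crps_q_pos x).ne'
  unfold crpsG
  field_simp
  linear_combination x * hq

lemma crpsD_nonneg (x : ℝ) : 0 ≤ crpsD x := by
  unfold crpsD
  have := crps_q_pos x
  positivity

lemma crpsF_tendsto : Tendsto (fun v : ℝ => 1/2 + crpsG v) atTop (𝓝 1) := by
  have := crpsG_tendsto.const_add (1/2 : ℝ)
  norm_num at this ⊢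
  exact this

lemma crpsD_int (x : ℝ) : ∫ t in Iic x, crpsD t = 1/2 + crpsG x := by
  have heven : ∀ t : ℝ, crpsD (-t) = crpsD t := fun t => by unfold crpsD; rw [crps_q_even]
  have h1 := integral_comp_neg_Ioi (-x) crpsD
  simp only [heven, neg_neg] at h1
  have h2 : ∫ t in Ioi (-x), crpsD t = 1 - (1/2 + crpsG (-x)) :=
    integral_Ioi_of_hasDerivAt_of_nonneg'
      (fun u _ => (hasDerivAt_crpsG u).const_add (1/2))
      (fun u _ => crpsD_nonneg u) crpsF_tendsto
  rw [← h1, h2, crpsG_odd]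
  ring

lemma crps_pdf (x : ℝ) :
    Real.Gamma (5/2) / (2 * Real.sqrt π * Real.Gamma 2) * (1 + x^2/4) ^ (-(5:ℝ)/2)
      = crpsD x := by
  have h12 : Real.Gamma (1/2 : ℝ) = Real.sqrt π := Real.Gamma_one_half_eq
  have h32 : Real.Gamma (3/2 : ℝ) = Real.sqrt π / 2 := by
    rw [show (3/2 : ℝ) = 1/2 + 1 by norm_num, Real.Gamma_add_one (by norm_num), h12]; ring
  have h52 : Real.Gamma (5/2 : ℝ) = 3 * Real.sqrt π / 4 := by
    rw [show (5/2 : ℝ) = 3/2 + 1 by norm_num, Real.Gamma_add_one (by norm_num), h32]; ring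
  have h2 : Real.Gamma (2:ℝ) = 1 := Real.Gamma_two
  have hq : (Real.sqrt (x^2+4))^2 = x^2+4 := crps_q_sq x
  have hq0 : 0 < Real.sqrt (x^2+4) := crps_q_pos x
  have hb : (0:ℝ) ≤ Real.sqrt (x^2+4)/2 := by positivity
  have hbase : 1 + x^2/4 = (Real.sqrt (x^2+4)/2)^2 := by
    rw [div_pow, hq]; ring
  have hrpow : ((Real.sqrt (x^2+4)/2)^2 : ℝ) ^ (-(5:ℝ)/2)
      = ((Real.sqrt (x^2+4)/2)^5)⁻¹ := by
    rw [show ((Real.sqrt (x^2+4)/2)^2 : ℝ) = (Real.sqrt (x^2+4)/2) ^ (2:ℝ) by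
      rw [← Real.rpow_natCast (Real.sqrt (x^2+4)/2) 2]; norm_num]
    rw [← Real.rpow_mul hb, show (2:ℝ)*(-(5:ℝ)/2) = -(5:ℝ) by norm_num,
      Real.rpow_neg hb, show ((5:ℝ)) = ((5:ℕ):ℝ) by norm_num, Real.rpow_natCast]
  rw [hbase, hrpow, h52, h2, crpsD]
  have hπ : 0 < Real.sqrt π := Real.sqrt_pos.mpr Real.pi_pos
  field_simp
  ring

lemma crps_K (a : ℝ) : ∫ x in Ioi a, (1/2 - crpsG x)^2 = -(15*π/128) - crpsW a :=
  integral_Ioi_of_hasDerivAt_of_nonneg' (fun x _ => hasDerivAt_crpsW x)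
    (fun x _ => sq_nonneg _) crpsW_tendsto

lemma crps_Kint (a : ℝ) : IntegrableOn (fun x : ℝ => (1/2 - crpsG x)^2) (Ioi a) :=
  integrableOn_Ioi_deriv_of_nonneg' (fun x _ => hasDerivAt_crpsW x)
    (fun x _ => sq_nonneg _) crpsW_tendsto

lemma crpsW_add (x : ℝ) : crpsW (-x) + crpsW x
    = -Real.sqrt (x^2+4) + 2/Real.sqrt (x^2+4) := by
  unfold crpsW
  rw [crps_q_even, show ((-x)/2 : ℝ) = -(x/2) by ring, Real.arctan_neg, neg_pow]
  ring

lemma crps_Gamma32 : Real.Gamma (3/2 : ℝ) = Real.sqrt π / 2 := by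
  rw [show (3/2 : ℝ) = 1/2 + 1 by norm_num, Real.Gamma_add_one (by norm_num),
    Real.Gamma_one_half_eq]; ring

lemma crps_Gamma52 : Real.Gamma (5/2 : ℝ) = 3 * Real.sqrt π / 4 := by
  rw [show (5/2 : ℝ) = 3/2 + 1 by norm_num, Real.Gamma_add_one (by norm_num),
    crps_Gamma32]; ring

lemma crps_Gamma72 : Real.Gamma (7/2 : ℝ) = 15 * Real.sqrt π / 8 := by
  rw [show (7/2 : ℝ) = 5/2 + 1 by norm_num, Real.Gamma_add_one (by norm_num),
    crps_Gamma52]; ring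

lemma crps_Gamma4 : Real.Gamma (4 : ℝ) = 6 := by
  rw [show (4:ℝ) = ((3:ℕ):ℝ) + 1 by norm_num, Real.Gamma_nat_eq_factorial]
  norm_num [Nat.factorial]


/-- Closed form of the CRPS for the location-scale `t` distribution with 4 degrees of freedom:
`CRPS(F,y) = σz[2F₄*(z)-1] + 2[(4σ²+(y-μ)²)/(3σ)]f₄*(z) - 4σB(1/2,7/2)/(3B(1/2,2)²)`
with `z = (y-μ)/σ`. -/
theorem stmt18 (μ σ y : ℝ) (hσ : 0 < σ)
    (f F : ℝ → ℝ) (B : ℝ → ℝ → ℝ)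
    (hf : ∀ x, f x = Real.Gamma (5/2) / (2 * Real.sqrt π * Real.Gamma 2) *
        (1 + x^2/4) ^ (-(5:ℝ)/2))
    (hF : ∀ x, F x = ∫ t in Set.Iic x, f t)
    (hB : ∀ a b, B a b = Real.Gamma a * Real.Gamma b / Real.Gamma (a + b)) :
    (∫ t : ℝ, (F ((t - μ)/σ) - Set.indicator (Set.Ici y) (fun _ => (1:ℝ)) t) ^ 2)
      = σ * ((y - μ)/σ) * (2 * F ((y - μ)/σ) - 1)
        + 2 * ((4*σ^2 + (y - μ)^2) / (3*σ)) * f ((y - μ)/σ)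
        - 4 * σ * B (1/2) (7/2) / (3 * B (1/2) 2 ^ 2) := by
  have hσ0 : σ ≠ 0 := ne_of_gt hσ
  set z : ℝ := (y - μ)/σ with hz
  clear_value z
  have hyz : y - μ = σ * z := by rw [hz]; field_simp
  have hfD : ∀ x, f x = crpsD x := fun x => by rw [hf x, crps_pdf]
  have hFG : ∀ x, F x = 1/2 + crpsG x := fun x => by
    rw [hF x]; simp only [hfD]; exact crpsD_int x
  have hind : ∀ t : ℝ, Set.indicator (Set.Ici y) (fun _ => (1:ℝ)) t
      = Set.indicator (Set.Ici z) (fun _ => (1:ℝ)) ((t - μ)/σ) := by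
    intro t
    by_cases h : y ≤ t
    · rw [Set.indicator_of_mem (show t ∈ Set.Ici y from h),
        Set.indicator_of_mem (show (t - μ)/σ ∈ Set.Ici z by
          rw [Set.mem_Ici, hz]; gcongr)]
    · push_neg at h
      rw [Set.indicator_of_notMem (show t ∉ Set.Ici y by simpa using h),
        Set.indicator_of_notMem (show (t - μ)/σ ∉ Set.Ici z by
          simp only [Set.mem_Ici, not_le, hz]; gcongr)]
  set φ : ℝ → ℝ := fun u =>
    ((1/2 + crpsG u) - Set.indicator (Set.Ici z) (fun _ => (1:ℝ)) u)^2 with hφ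
  have hLHS : (∫ t : ℝ, (F ((t - μ)/σ) - Set.indicator (Set.Ici y) (fun _ => (1:ℝ)) t) ^ 2)
      = ∫ t : ℝ, φ ((t - μ)/σ) := by
    congr 1; funext t; rw [hind t, hFG]
  have hcomp : (∫ t : ℝ, φ ((t - μ)/σ)) = σ * ∫ u, φ u := by
    rw [show (fun t : ℝ => φ ((t - μ)/σ)) = (fun t : ℝ => (fun s => φ (s/σ)) (t - μ)) from
      rfl, integral_sub_right_eq_self (fun s => φ (s/σ)) μ,
      MeasureTheory.Measure.integral_comp_div φ σ, abs_of_pos hσ, smul_eq_mul]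
  set φ₁ : ℝ → ℝ := fun u => (1/2 + crpsG u)^2 with hφ₁
  set φ₂ : ℝ → ℝ := fun u => (1/2 - crpsG u)^2 with hφ₂
  have hEq1 : Set.EqOn φ φ₁ (Iio z) := by
    intro u hu
    rw [hφ, hφ₁]
    simp only
    rw [Set.indicator_of_notMem (by simpa using (not_le.mpr hu))]
    ring
  have hEq2 : Set.EqOn φ φ₂ (Ici z) := by
    intro u hu
    rw [hφ, hφ₂]
    simp only
    rw [Set.indicator_of_mem hu]
    ring
  have hI1 : IntegrableOn φ₁ (Iio z) := by
    have h := (MeasurePreserving.integrableOn_comp_preimage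
      (Measure.measurePreserving_neg (volume : Measure ℝ))
      (Homeomorph.neg ℝ).measurableEmbedding).2 (crps_Kint (-z))
    have hs : ((fun x : ℝ => -x) ⁻¹' Ioi (-z)) = Iio z := by
      ext u; simp only [Set.mem_preimage, Set.mem_Ioi, Set.mem_Iio]; constructor <;>
        intro <;> linarith
    have hfun : ((fun x : ℝ => (1/2 - crpsG x)^2) ∘ (fun x : ℝ => -x)) = φ₁ := by
      funext u; simp only [Function.comp_apply, hφ₁, crpsG_odd]; ring
    rwa [hfun, hs] at h
  have hI2 : IntegrableOn φ₂ (Ici z) :=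
    (integrableOn_Ici_iff_integrableOn_Ioi).mpr (crps_Kint z)
  have hIφ : Integrable φ := by
    rw [← integrableOn_univ, ← Set.Iio_union_Ici (a := z)]
    exact (hI1.congr_fun hEq1.symm measurableSet_Iio).union
      (hI2.congr_fun hEq2.symm measurableSet_Ici)
  have hsplit : ∫ u, φ u = (∫ u in Iio z, φ u) + ∫ u in Ici z, φ u := by
    have h := integral_add_compl (measurableSet_Iio : MeasurableSet (Iio z)) hIφ
    rw [compl_Iio] at h
    exact h.symm
  have e1 : ∫ u in Iio z, φ u = -(15*π/128) - crpsW (-z) := by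
    rw [setIntegral_congr_fun measurableSet_Iio hEq1, ← integral_Iic_eq_integral_Iio]
    have h1 := integral_comp_neg_Ioi (-z) φ₁
    rw [neg_neg] at h1
    rw [← h1]
    have hodd : ∀ u : ℝ, φ₁ (-u) = (1/2 - crpsG u)^2 := fun u => by
      rw [hφ₁]; simp only; rw [crpsG_odd]; ring
    simp only [hodd]
    exact crps_K (-z)
  have e2 : ∫ u in Ici z, φ u = -(15*π/128) - crpsW z := by
    rw [setIntegral_congr_fun measurableSet_Ici hEq2, integral_Ici_eq_integral_Ioi, hφ₂]
    exact crps_K z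
  have hB1 : B (1/2) (7/2) = 5*π/16 := by
    rw [hB, show (1/2 : ℝ) + 7/2 = 4 by norm_num, Real.Gamma_one_half_eq, crps_Gamma72,
      crps_Gamma4]
    rw [show Real.sqrt π * (15 * Real.sqrt π / 8) = 15 * (Real.sqrt π * Real.sqrt π) / 8
      by ring, Real.mul_self_sqrt Real.pi_pos.le]
    ring
  have hB2 : B (1/2) 2 = 4/3 := by
    rw [hB, show (1/2 : ℝ) + 2 = 5/2 by norm_num, Real.Gamma_one_half_eq, Real.Gamma_two,
      crps_Gamma52]
    have hπ : Real.sqrt π ≠ 0 := ne_of_gt (Real.sqrt_pos.mpr Real.pi_pos)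
    field_simp
  rw [hLHS, hcomp, hsplit, e1, e2, hB1, hB2, hfD, hFG, hyz]
  have hWs := crpsW_add z
  set q : ℝ := Real.sqrt (z^2+4) with hqdef
  have hq : q^2 = z^2+4 := crps_q_sq z
  have hq0 : q ≠ 0 := ne_of_gt (crps_q_pos z)
  clear_value q
  rw [show -(15*π/128) - crpsW (-z) + (-(15*π/128) - crpsW z)
      = -(15*π/64) - (crpsW (-z) + crpsW z) by ring, hWs, crpsD, crpsG, ← hqdef]
  field_simp
  linear_combination (((-12288:ℝ)*q^2 + 294912*q^6*σ^2)*z^2 + ((-73728:ℝ)*q^2 + 2359296*q^4*σ^2 + 1769472*q^6*σ^2 - 98304) + ((-12288:ℝ)*q^2 + 294912*q^6*σ^2)*(q^2-4) - (((-24576:ℝ)*q^2 + 294912*q^6*σ^2)*z^2 + ((-147456:ℝ)*q^2 + 2359296*q^4*σ^2 + 1769472*q^6*σ^2 - 196608) + ((-24576:ℝ)*q^2 + 294912*q^6*σ^2)*(q^2-4))) * hq
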